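/- If G is a K_{1,3}-free (claw-free) graph, then i(G) = γ(G). -/

import Mathlib

open SimpleGraph

variable {V : Type*}

/-- The closed neighborhood `N[S]` of a set of vertices. -/
def closedNbhd (G : SimpleGraph V) (S : Set V) : Set V :=
  {v | v ∈ S ∨ ∃ u ∈ S, G.Adj u v}

/-- The open neighborhood `N(S)` of a set of vertices. -/
def openNbhd (G : SimpleGraph V) (S : Set V) : Set V :=
  {v | ∃ u ∈ S, G.Adj u v}

/-- A set is independent if no two of its vertices are adjacent. -/
def IsIndep (G : SimpleGraph V) (S : Set V) : Prop :=
  S.Pairwise fun u w => ¬ G.Adj u w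

/-- `S` is `K_k`-isolating: `G - N[S]` contains no clique of size `k`. -/
def IsIsolating (G : SimpleGraph V) (k : ℕ) (S : Set V) : Prop :=
  ∀ T : Finset V, (↑T : Set V) ∩ closedNbhd G S = ∅ → G.IsClique ↑T → T.card ≠ k

/-- The `K_k`-isolation number `ι_k(G)`. -/
noncomputable def iota [Fintype V] (G : SimpleGraph V) (k : ℕ) : ℕ :=
  sInf {n | ∃ S : Finset V, S.card = n ∧ IsIsolating G k ↑S}

/-- The independent `K_k`-isolation number `ι'_k(G)`. -/
noncomputable def iota' [Fintype V] (G : SimpleGraph V) (k : ℕ) : ℕ :=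
  sInf {n | ∃ S : Finset V, S.card = n ∧ IsIsolating G k ↑S ∧ IsIndep G ↑S}

/-- A dominating set: every vertex lies in `N[S]`. -/
def IsDominating (G : SimpleGraph V) (S : Set V) : Prop :=
  ∀ v, v ∈ closedNbhd G S

/-- The domination number `γ(G)`. -/
noncomputable def gammaNum [Fintype V] (G : SimpleGraph V) : ℕ :=
  sInf {n | ∃ S : Finset V, S.card = n ∧ IsDominating G ↑S}

/-- The independent domination number `i(G)`. -/
noncomputable def iNum [Fintype V] (G : SimpleGraph V) : ℕ :=
  sInf {n | ∃ S : Finset V, S.card = n ∧ IsDominating G ↑S ∧ IsIndep G ↑S}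

/-- `G` is `K_{1,r}`-free: no induced subgraph isomorphic to the star `K_{1,r}`. -/
def K1rFree (G : SimpleGraph V) (r : ℕ) : Prop :=
  IsEmpty (completeBipartiteGraph (Fin 1) (Fin r) ↪g G)

/-- Degree of `v` inside the vertex subset `T`. -/
def degIn [DecidableEq V] (G : SimpleGraph V) [DecidableRel G.Adj] (T : Finset V) (v : V) : ℕ :=
  (T.filter (G.Adj v)).card

lemma no_claw (G : SimpleGraph V) (hfree : K1rFree G 3) {v a b c : V}
    (ha : G.Adj v a) (hb : G.Adj v b) (hc : G.Adj v c)
    (hab : a ≠ b) (hac : a ≠ c) (hbc : b ≠ c)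
    (nab : ¬G.Adj a b) (nac : ¬G.Adj a c) (nbc : ¬G.Adj b c) : False := by
  have nba : ¬G.Adj b a := fun h => nab h.symm
  have nca : ¬G.Adj c a := fun h => nac h.symm
  have ncb : ¬G.Adj c b := fun h => nbc h.symm
  have hav : G.Adj a v := ha.symm
  have hbv : G.Adj b v := hb.symm
  have hcv : G.Adj c v := hc.symm
  have hva : v ≠ a := G.ne_of_adj ha
  have hvb : v ≠ b := G.ne_of_adj hb
  have hvc : v ≠ c := G.ne_of_adj hc
  have naa : ¬G.Adj a a := G.irrefl
  have nbb : ¬G.Adj b b := G.irrefl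
  have ncc : ¬G.Adj c c := G.irrefl
  have nvv : ¬G.Adj v v := G.irrefl
  refine hfree.false ⟨⟨Sum.elim (fun _ => v) ![a, b, c], ?_⟩, ?_⟩
  · rintro (x | x) (y | y) h
    · simp [Fin.eq_zero x, Fin.eq_zero y]
    · exfalso; fin_cases y <;> simp_all
    · exfalso; fin_cases x <;> simp_all
    · fin_cases x <;> fin_cases y <;> simp_all
  · rintro (x | x) (y | y)
    · simp [completeBipartiteGraph, nvv, DFunLike.coe]
    · fin_cases y <;> simp_all [completeBipartiteGraph, DFunLike.coe]
    · fin_cases x <;> simp_all [completeBipartiteGraph, DFunLike.coe]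
    · fin_cases x <;> fin_cases y <;> simp_all [completeBipartiteGraph, DFunLike.coe]

/-- Number of ordered adjacent pairs inside `D`. -/
noncomputable def ec (G : SimpleGraph V) (D : Finset V) : ℕ :=
  letI := Classical.decRel G.Adj
  ((D ×ˢ D).filter fun p => G.Adj p.1 p.2).card

lemma key_lemma [Fintype V] (G : SimpleGraph V) (hfree : K1rFree G 3) :
    ∀ n (D : Finset V), ec G D ≤ n → IsDominating G ↑D →
      ∃ D' : Finset V, D'.card ≤ D.card ∧ IsDominating G ↑D' ∧ IsIndep G ↑D' := by
  classical
  intro n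
  induction n with
  | zero =>
    intro D hec hdom
    refine ⟨D, le_rfl, hdom, ?_⟩
    intro a ha b hb hne hadj
    have h0 : ec G D = 0 := Nat.le_zero.mp hec
    unfold ec at h0
    rw [Finset.card_eq_zero, Finset.filter_eq_empty_iff] at h0
    exact h0 (Finset.mk_mem_product (by exact_mod_cast ha) (by exact_mod_cast hb)) hadj
  | succ n ih =>
    intro D hec hdom
    by_cases hind : ∃ u ∈ D, ∃ v ∈ D, G.Adj u v
    · obtain ⟨u, hu, v, hv, huv⟩ := hind
      have huvne : u ≠ v := G.ne_of_adj huv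
      -- a helper for the edge-count decrease: if D' ⊆ stuff with v ∉ D'
      have ec_lt : ∀ D' : Finset V, (∀ a ∈ D', a ∈ D) → v ∉ D' → ec G D' < ec G D := by
        intro D' hsub hvD'
        unfold ec
        apply Finset.card_lt_card
        constructor
        · intro p hp
          simp only [Finset.mem_filter, Finset.mem_product] at hp ⊢
          exact ⟨⟨hsub _ hp.1.1, hsub _ hp.1.2⟩, hp.2⟩
        · intro hcon
          have := hcon (Finset.mem_filter.mpr
            ⟨Finset.mk_mem_product hu hv, huv⟩)
          simp only [Finset.mem_filter, Finset.mem_product] at this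
          exact hvD' this.1.2
      by_cases hdom' : IsDominating G ↑(D.erase v)
      · have hlt : ec G (D.erase v) < ec G D :=
          ec_lt (D.erase v) (fun a ha => Finset.mem_of_mem_erase ha)
            (Finset.notMem_erase v D)
        obtain ⟨D', h1, h2, h3⟩ := ih (D.erase v) (by omega) hdom'
        exact ⟨D', h1.trans ((Finset.card_erase_of_mem hv).le.trans (Nat.sub_le _ _)),
          h2, h3⟩
      · -- there is a vertex x dominated only through v
        simp only [IsDominating, not_forall] at hdom'
        obtain ⟨x, hx⟩ := hdom'
        have hxne : x ∉ (D.erase v : Finset V) ∧ ∀ w ∈ D.erase v, ¬G.Adj w x := by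
          constructor
          · intro h; exact hx (Or.inl (by exact_mod_cast h))
          · intro w hw hadj; exact hx (Or.inr ⟨w, by exact_mod_cast hw, hadj⟩)
        have hxD : x ∉ D := by
          intro hxD
          have hxv : x = v := by
            by_contra hne
            exact hxne.1 (Finset.mem_erase.mpr ⟨hne, hxD⟩)
          subst hxv
          exact hxne.2 u (Finset.mem_erase.mpr ⟨huvne, hu⟩) huv
        have hvx : G.Adj v x := by
          rcases hdom x with hx1 | ⟨w, hw, hwx⟩
          · exact absurd (by exact_mod_cast hx1) hxD
          · have hwD : w ∈ D := by exact_mod_cast hw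
            by_cases hwv : w = v
            · subst hwv; exact hwx
            · exact absurd hwx (hxne.2 w (Finset.mem_erase.mpr ⟨hwv, hwD⟩))
        have hxu : x ≠ u := by
          intro h; subst h; exact hxD hu
        set D' := insert x (D.erase v) with hD'
        have hvD' : v ∉ D' := by
          simp only [hD', Finset.mem_insert]
          rintro (h | h)
          · exact hxD (h ▸ hv)
          · exact Finset.notMem_erase v D h
        have hcard : D'.card ≤ D.card := by
          calc D'.card ≤ (D.erase v).card + 1 := Finset.card_insert_le _ _
            _ = D.card := Finset.card_erase_add_one hv
        have hdomD' : IsDominating G ↑D' := by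
          intro p
          by_cases hp : p ∈ closedNbhd G ↑(D.erase v)
          · rcases hp with hp | ⟨w, hw, hwp⟩
            · exact Or.inl (by
                simp only [hD', Finset.coe_insert, Set.mem_insert_iff]
                exact Or.inr hp)
            · refine Or.inr ⟨w, ?_, hwp⟩
              simp only [hD', Finset.coe_insert, Set.mem_insert_iff]
              right; exact hw
          · -- p is dominated only through v
            have hpD : ∀ w ∈ D.erase v, ¬G.Adj w p := by
              intro w hw hadj; exact hp (Or.inr ⟨w, by exact_mod_cast hw, hadj⟩)
            have hpErase : p ∉ (D.erase v : Finset V) := by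
              intro h; exact hp (Or.inl (by exact_mod_cast h))
            by_cases hpv : p = v
            · subst hpv
              exact Or.inr ⟨u, by simp [hD', Finset.mem_erase, huvne, hu], huv⟩
            have hpDfull : p ∉ D := by
              intro h; exact hpErase (Finset.mem_erase.mpr ⟨hpv, h⟩)
            have hvp : G.Adj v p := by
              rcases hdom p with h1 | ⟨w, hw, hwp⟩
              · exact absurd (by exact_mod_cast h1) hpDfull
              · have hwD : w ∈ D := by exact_mod_cast hw
                by_cases hwv : w = v
                · subst hwv; exact hwp
                · exact absurd hwp (hpD w (Finset.mem_erase.mpr ⟨hwv, hwD⟩))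
            by_cases hpx : p = x
            · subst hpx
              exact Or.inl (by simp [hD'])
            · -- claw argument: v with u, x, p
              have hpu : p ≠ u := fun h => hpDfull (h ▸ hu)
              have nux : ¬G.Adj u x :=
                fun h => hxne.2 u (Finset.mem_erase.mpr ⟨huvne, hu⟩) h
              have nup : ¬G.Adj u p :=
                fun h => hpD u (Finset.mem_erase.mpr ⟨huvne, hu⟩) h
              by_cases nxp : G.Adj x p
              · exact Or.inr ⟨x, by simp [hD'], nxp⟩
              · exact absurd (no_claw G hfree huv.symm hvx hvp
                  (Ne.symm hxu) (Ne.symm hpu) (fun h => hpx h.symm) nux nup nxp) id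
        have hecD' : ec G D' < ec G D := by
          unfold ec
          apply Finset.card_lt_card
          constructor
          · intro p hp
            simp only [Finset.mem_filter, Finset.mem_product] at hp ⊢
            obtain ⟨⟨hp1, hp2⟩, hadj⟩ := hp
            simp only [hD', Finset.mem_insert] at hp1 hp2
            have hp1x : p.1 ≠ x := by
              rintro rfl
              rcases hp2 with h | h
              · exact G.irrefl (h ▸ hadj)
              · exact hxne.2 p.2 h hadj.symm
            have hp2x : p.2 ≠ x := by
              rintro rfl
              rcases hp1 with h | h
              · exact G.irrefl (h ▸ hadj)
              · exact hxne.2 p.1 h hadj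
            refine ⟨⟨?_, ?_⟩, hadj⟩
            · exact Finset.mem_of_mem_erase (hp1.resolve_left hp1x)
            · exact Finset.mem_of_mem_erase (hp2.resolve_left hp2x)
          · intro hcon
            have := hcon (Finset.mem_filter.mpr
              ⟨Finset.mk_mem_product hu hv, huv⟩)
            simp only [Finset.mem_filter, Finset.mem_product] at this
            exact hvD' this.1.2
        obtain ⟨D'', h1, h2, h3⟩ := ih D' (by omega) hdomD'
        exact ⟨D'', h1.trans hcard, h2, h3⟩
    · refine ⟨D, le_rfl, hdom, ?_⟩
      intro a ha b hb hne hadj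
      exact hind ⟨a, by exact_mod_cast ha, b, by exact_mod_cast hb, hadj⟩

/-- For claw-free graphs, i(G) = γ(G). -/
theorem stmt_5 [Fintype V] (G : SimpleGraph V) (hfree : K1rFree G 3) :
    iNum G = gammaNum G := by
  classical
  have univ_dom : IsDominating G ↑(Finset.univ : Finset V) := by
    intro v; exact Or.inl (by simp)
  have hγne : {n | ∃ S : Finset V, S.card = n ∧ IsDominating G ↑S}.Nonempty :=
    ⟨_, Finset.univ, rfl, univ_dom⟩
  -- γ ≤ i
  have h1 : gammaNum G ≤ iNum G := by
    obtain ⟨D', _, hdom', hind'⟩ := key_lemma G hfree (ec G Finset.univ) Finset.univ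
      le_rfl univ_dom
    have hne : {n | ∃ S : Finset V, S.card = n ∧ IsDominating G ↑S ∧ IsIndep G ↑S}.Nonempty :=
      ⟨D'.card, D', rfl, hdom', hind'⟩
    have hsub : {n | ∃ S : Finset V, S.card = n ∧ IsDominating G ↑S ∧ IsIndep G ↑S} ⊆
        {n | ∃ S : Finset V, S.card = n ∧ IsDominating G ↑S} := by
      rintro n ⟨S, hS, hd, _⟩
      exact ⟨S, hS, hd⟩
    exact csInf_le_csInf (OrderBot.bddBelow _) hne hsub
  -- i ≤ γ
  have h2 : iNum G ≤ gammaNum G := by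
    obtain ⟨D, hcard, hdom⟩ := Nat.sInf_mem hγne
    obtain ⟨D', hle, hdom', hind'⟩ := key_lemma G hfree (ec G D) D le_rfl hdom
    calc iNum G ≤ D'.card := Nat.sInf_le ⟨D', rfl, hdom', hind'⟩
      _ ≤ D.card := hle
      _ = gammaNum G := hcard
  omega
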